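/- Let $N \ge 1$ and let $p_0, p_1, \dots, p_N$ be real polynomials such that $\deg p_m = N - m$ for all $0 \le m \le N$, the leading coefficient $c_m$ of each $p_m$ is strictly positive, and for each $2 \le m \le N$ there exists a polynomial $q_m$ of degree $1$ with $p_{m-2}(x) = q_m(x)\, p_{m-1}(x) - p_m(x)$ for all $x$. Then $p_0$ has $N$ distinct real roots. -/

import Mathlib

open Polynomial Filter


/-- IVT for polynomials. -/
lemma poly_root_between (e : Polynomial ℝ) {a b : ℝ} (hab : a < b)
    (h : e.eval a * e.eval b < 0) : ∃ x, a < x ∧ x < b ∧ e.eval x = 0 := by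
  have hc : ContinuousOn (fun x => e.eval x) (Set.Icc a b) := (e.continuous).continuousOn
  rcases lt_or_ge (e.eval a) 0 with ha | ha
  · have hb : 0 < e.eval b := by nlinarith
    have := intermediate_value_Ioo hab.le hc (Set.mem_Ioo.2 ⟨ha, hb⟩)
    rcases this with ⟨x, hx, hx0⟩
    exact ⟨x, hx.1, hx.2, hx0⟩
  · have ha' : 0 < e.eval a := by
      rcases ha.lt_or_eq with h' | h'
      · exact h'
      · exfalso; rw [← h'] at h; simp at h
    have hb : e.eval b < 0 := by nlinarith
    have := intermediate_value_Ioo' hab.le hc (Set.mem_Ioo.2 ⟨hb, ha'⟩)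
    rcases this with ⟨x, hx, hx0⟩
    exact ⟨x, hx.1, hx.2, hx0⟩

/-- sign of a product of (x - rᵢ). -/
lemma sign_prod : ∀ (n : ℕ) (r : Fin n → ℝ) (x : ℝ) (j : ℕ), j ≤ n →
    (∀ i : Fin n, (i : ℕ) < j → r i < x) → (∀ i : Fin n, j ≤ (i : ℕ) → x < r i) →
    0 < (-1 : ℝ) ^ (n + j) * ∏ i, (x - r i) := by
  intro n
  induction n with
  | zero => intro r x j hj _ _; interval_cases j; simp
  | succ n ih =>
    intro r x j hj h1 h2
    rcases eq_or_lt_of_le hj with h | h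
    · subst h
      have : ∀ i : Fin (n+1), 0 < x - r i := fun i => sub_pos.2 (h1 i i.isLt)
      have hprod : 0 < ∏ i : Fin (n+1), (x - r i) := Finset.prod_pos fun i _ => this i
      have : (-1 : ℝ) ^ ((n+1) + (n+1)) = 1 := by
        rw [← two_mul]; exact (neg_one_pow_eq_one_iff_even (by norm_num)).2 (even_two_mul _)
      rw [this]; linarith
    · have hj' : j ≤ n := by omega
      have ihh := ih (fun i => r i.castSucc) x j hj'
        (fun i hi => h1 i.castSucc hi) (fun i hi => h2 i.castSucc hi)
      have hlast : x < r (Fin.last n) := h2 (Fin.last n) (by simp; omega)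
      rw [Fin.prod_univ_castSucc]
      have : (-1 : ℝ) ^ (n + 1 + j) = -(-1 : ℝ) ^ (n + j) := by
        rw [show n + 1 + j = (n + j) + 1 by ring, pow_succ]; ring
      rw [this]
      nlinarith [ihh, sub_neg.2 hlast]

lemma factor_of_roots (n : ℕ) (hn : 0 < n) (f : Polynomial ℝ) (hd : f.natDegree = n)
    (r : Fin n → ℝ) (hinj : Function.Injective r) (hroot : ∀ i, f.eval (r i) = 0) :
    f = Polynomial.C f.leadingCoeff * ∏ i, (Polynomial.X - Polynomial.C (r i)) := by
  set P : Polynomial ℝ := ∏ i, (Polynomial.X - Polynomial.C (r i)) with hP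
  have hPm : P.Monic := monic_prod_of_monic _ _ fun i _ => monic_X_sub_C (r i)
  have hPd : P.natDegree = n := by
    rw [hP, natDegree_prod _ _ (fun i _ => (monic_X_sub_C (r i)).ne_zero)]
    simp
  set d : Polynomial ℝ := f - Polynomial.C f.leadingCoeff * P with hdd
  have hcoeff : ∀ m, n ≤ m → d.coeff m = 0 := by
    intro m hm
    rcases eq_or_lt_of_le hm with h | h
    · have h1 : f.coeff m = f.leadingCoeff := by
        rw [← h, ← hd]; rfl
      have h2 : P.coeff m = 1 := by rw [← h, ← hPd]; exact hPm
      simp [hdd, h1, h2]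
    · have h1 : f.coeff m = 0 := coeff_eq_zero_of_natDegree_lt (by omega)
      have h2 : P.coeff m = 0 := coeff_eq_zero_of_natDegree_lt (by omega)
      simp [hdd, h1, h2]
  have hdroot : ∀ i, d.eval (r i) = 0 := by
    intro i
    have hPe : P.eval (r i) = 0 := by
      rw [hP, eval_prod]
      exact Finset.prod_eq_zero (Finset.mem_univ i) (by simp)
    simp [hdd, hroot i, hPe]
  by_contra hne
  have hd0 : d ≠ 0 := fun h => hne (by rw [hdd] at h; linear_combination (norm := ring_nf) h)
  have hdn : d.natDegree ≤ n - 1 := by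
    rw [natDegree_le_iff_coeff_eq_zero]
    intro m hm; exact hcoeff m (by omega)
  have hcard : n ≤ d.roots.toFinset.card := by
    have hsub : Finset.image r Finset.univ ⊆ d.roots.toFinset := by
      intro x hx
      rcases Finset.mem_image.1 hx with ⟨i, _, rfl⟩
      rw [Multiset.mem_toFinset, mem_roots']
      exact ⟨hd0, hdroot i⟩
    calc n = (Finset.image r Finset.univ).card := by
              rw [Finset.card_image_of_injective _ hinj]; simp
      _ ≤ _ := Finset.card_le_card hsub
  have := (d.roots.toFinset_card_le).trans (d.card_roots')
  omega

lemma exists_pos_right (e : Polynomial ℝ) (hdeg : 0 < e.natDegree)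
    (hl : 0 < e.leadingCoeff) (c : ℝ) : ∃ x, c < x ∧ 0 < e.eval x := by
  have hdeg' : 0 < e.degree := by
    rw [← natDegree_pos_iff_degree_pos]; exact hdeg
  have ht := tendsto_atTop_of_leadingCoeff_nonneg e hdeg' hl.le
  have h1 : ∀ᶠ x : ℝ in atTop, 0 < e.eval x := ht.eventually (eventually_gt_atTop 0)
  have h2 : ∀ᶠ x : ℝ in atTop, c < x := eventually_gt_atTop c
  rcases (h2.and h1).exists with ⟨x, hx1, hx2⟩
  exact ⟨x, hx1, hx2⟩

lemma exists_sign_left (e : Polynomial ℝ) (k : ℕ) (hdeg : e.natDegree = k + 2)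
    (hl : 0 < e.leadingCoeff) (c : ℝ) : ∃ x, x < c ∧ 0 < (-1 : ℝ) ^ k * e.eval x := by
  set E : Polynomial ℝ := e.comp (-Polynomial.X) with hE
  have hnX : (-Polynomial.X : Polynomial ℝ).natDegree = 1 := by simp
  have hEl : E.leadingCoeff = e.leadingCoeff * (-1) ^ (k + 2) := by
    rw [hE, leadingCoeff_comp (by rw [hnX]; norm_num)]
    simp [hdeg]
  have hEd : 0 < E.degree := by
    rw [← natDegree_pos_iff_degree_pos, hE, natDegree_comp, hnX, hdeg]; omega
  have hEe : ∀ x : ℝ, E.eval x = e.eval (-x) := by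
    intro x; rw [hE, eval_comp]; simp
  rcases Nat.even_or_odd k with hk | hk
  · have hpow : ((-1 : ℝ)) ^ (k + 2) = 1 :=
      (neg_one_pow_eq_one_iff_even (by norm_num : (-1:ℝ) ≠ 1)).2 (by rcases hk with ⟨t, ht⟩; exact ⟨t + 1, by omega⟩)
    have hpowk : ((-1 : ℝ)) ^ k = 1 :=
      (neg_one_pow_eq_one_iff_even (by norm_num : (-1:ℝ) ≠ 1)).2 hk
    have ht := tendsto_atTop_of_leadingCoeff_nonneg E hEd
      (by rw [hEl, hpow, mul_one]; exact hl.le)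
    have h1 : ∀ᶠ x : ℝ in atTop, 0 < E.eval x := ht.eventually (eventually_gt_atTop 0)
    have h2 : ∀ᶠ x : ℝ in atTop, -c < x := eventually_gt_atTop (-c)
    rcases (h2.and h1).exists with ⟨x, hx1, hx2⟩
    refine ⟨-x, by linarith, ?_⟩
    rw [hpowk, one_mul, ← hEe]; exact hx2
  · have hpow : ((-1 : ℝ)) ^ (k + 2) = -1 := Odd.neg_one_pow (by rcases hk with ⟨t, ht⟩; exact ⟨t + 1, by omega⟩)
    have hpowk : ((-1 : ℝ)) ^ k = -1 := Odd.neg_one_pow hk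
    have ht := tendsto_atBot_of_leadingCoeff_nonpos E hEd
      (by rw [hEl, hpow]; nlinarith)
    have h1 : ∀ᶠ x : ℝ in atTop, E.eval x < 0 := ht.eventually (eventually_lt_atBot 0)
    have h2 : ∀ᶠ x : ℝ in atTop, -c < x := eventually_gt_atTop (-c)
    rcases (h2.and h1).exists with ⟨x, hx1, hx2⟩
    refine ⟨-x, by linarith, ?_⟩
    rw [hpowk, ← hEe x]; linarith

lemma mul_neg_of_signs {a b : ℝ} (m : ℕ) (ha : 0 < (-1:ℝ)^m * a)
    (hb : 0 < (-1:ℝ)^(m+1) * b) : a * b < 0 := by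
  have h : ((-1:ℝ)^m)^2 = 1 := by
    rw [← pow_mul, mul_comm, pow_mul]; norm_num
  rw [pow_succ] at hb; nlinarith

lemma key_step (k : ℕ) (f g e : Polynomial ℝ)
    (hfd : f.natDegree = k + 1) (hfl : 0 < f.leadingCoeff)
    (hed : e.natDegree = k + 2) (hel : 0 < e.leadingCoeff)
    (r : Fin (k+1) → ℝ) (hr : StrictMono r)
    (hfr : ∀ i, f.eval (r i) = 0)
    (hgs : ∀ i : Fin (k+1), 0 < (-1:ℝ)^(k + (i:ℕ)) * g.eval (r i))
    (hrel : ∀ i, e.eval (r i) = - g.eval (r i)) :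
    ∃ s : Fin (k+2) → ℝ, StrictMono s ∧ (∀ j, e.eval (s j) = 0) ∧
      ∀ j : Fin (k+2), 0 < (-1:ℝ)^((k+1) + (j:ℕ)) * f.eval (s j) := by
  have hes : ∀ i : Fin (k+1), 0 < (-1:ℝ)^(k + (i:ℕ) + 1) * e.eval (r i) := by
    intro i
    calc (0:ℝ) < (-1:ℝ)^(k + (i:ℕ)) * g.eval (r i) := hgs i
      _ = (-1:ℝ)^(k + (i:ℕ) + 1) * e.eval (r i) := by rw [hrel i, pow_succ]; ring
  have claim : ∀ j : Fin (k+2), ∃ x, e.eval x = 0 ∧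
      (∀ i : Fin (k+1), (i:ℕ) < (j:ℕ) → r i < x) ∧
      (∀ i : Fin (k+1), (j:ℕ) ≤ (i:ℕ) → x < r i) := by
    intro j
    rcases Nat.eq_zero_or_pos (j:ℕ) with hj0 | hjpos
    · -- leftmost root
      rcases exists_sign_left e k hed hel (r 0) with ⟨a, ha, hsa⟩
      have h0 : 0 < (-1:ℝ)^(k + ((0 : Fin (k+1)):ℕ) + 1) * e.eval (r 0) := hes 0
      simp only [Fin.val_zero, add_zero] at h0
      have hprod : e.eval a * e.eval (r 0) < 0 := mul_neg_of_signs k hsa h0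
      rcases poly_root_between e ha hprod with ⟨x, hx1, hx2, hx0⟩
      refine ⟨x, hx0, fun i hi => by omega, fun i _ => ?_⟩
      exact lt_of_lt_of_le hx2 (hr.monotone (Fin.zero_le i))
    · rcases Nat.lt_or_ge (j:ℕ) (k+2-1) with hjk | hjk
      · -- middle root, 1 ≤ j ≤ k
        have hj1 : 1 ≤ (j:ℕ) := hjpos
        have hjk' : (j:ℕ) ≤ k := by omega
        set i0 : Fin (k+1) := ⟨(j:ℕ) - 1, by omega⟩
        set i1 : Fin (k+1) := ⟨(j:ℕ), by omega⟩
        have h0 := hes i0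
        have h1 := hes i1
        have hexp : k + ((i0:ℕ)) + 1 = k + (j:ℕ) := by simp [i0]; omega
        have hexp1 : k + ((i1:ℕ)) + 1 = k + (j:ℕ) + 1 := by simp [i1]
        rw [hexp] at h0; rw [hexp1] at h1
        have hlt : r i0 < r i1 := hr (by show (j:ℕ) - 1 < (j:ℕ); omega)
        have hprod : e.eval (r i0) * e.eval (r i1) < 0 :=
          mul_neg_of_signs (k + (j:ℕ)) h0 h1
        rcases poly_root_between e hlt hprod with ⟨x, hx1, hx2, hx0⟩
        refine ⟨x, hx0, fun i hi => ?_, fun i hi => ?_⟩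
        · exact lt_of_le_of_lt (hr.monotone (by simp [Fin.le_def, i0]; omega)) hx1
        · exact lt_of_lt_of_le hx2 (hr.monotone (by simp [Fin.le_def, i1]; omega))
      · -- rightmost root, j = k+1
        have hj : (j:ℕ) = k + 1 := by have := j.isLt; omega
        rcases exists_pos_right e (by omega) hel (r (Fin.last k)) with ⟨b, hb, hsb⟩
        have h0 := hes (Fin.last k)
        have : (-1:ℝ)^(k + ((Fin.last k : Fin (k+1)):ℕ) + 1) = -1 := by
          simp only [Fin.val_last]
          exact Odd.neg_one_pow ⟨k, by ring⟩
        rw [this] at h0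
        have hneg : e.eval (r (Fin.last k)) < 0 := by linarith
        have hprod : e.eval (r (Fin.last k)) * e.eval b < 0 := by nlinarith
        rcases poly_root_between e hb hprod with ⟨x, hx1, hx2, hx0⟩
        refine ⟨x, hx0, fun i hi => ?_, fun i hi => by omega⟩
        · exact lt_of_le_of_lt (hr.monotone (Fin.le_last i)) hx1
  choose s hs0 hs1 hs2 using claim
  have hsm : StrictMono s := by
    intro j1 j2 hj
    have hlt : (j1:ℕ) < (j2:ℕ) := hj
    have hle : (j1:ℕ) < k + 1 := by have := j2.isLt; omega
    set i : Fin (k+1) := ⟨(j1:ℕ), hle⟩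
    calc s j1 < r i := hs2 j1 i (le_refl _)
      _ < s j2 := hs1 j2 i hlt
  have hfact := factor_of_roots (k+1) (by omega) f hfd r hr.injective hfr
  refine ⟨s, hsm, hs0, fun j => ?_⟩
  have hev : f.eval (s j) = f.leadingCoeff * ∏ i, (s j - r i) := by
    conv_lhs => rw [hfact]
    simp [eval_prod]
  rw [hev]
  have hsp := sign_prod (k+1) r (s j) (j:ℕ) (by have := j.isLt; omega)
    (hs1 j) (hs2 j)
  nlinarith

/-- Modified (secular) Sturm chain: if `p₀, p₁, …, p_N` are real polynomials
with `deg pₘ = N - m`, all leading coefficients strictly positive, and each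
`p_{m-2} = qₘ p_{m-1} - pₘ` for some degree-one polynomial `qₘ`, then `p₀` has
`N` distinct real roots. -/
theorem sturm_chain_all_roots_real (N : ℕ) (hN : 1 ≤ N) (p : ℕ → Polynomial ℝ)
    (hdeg : ∀ m ≤ N, (p m).natDegree = N - m)
    (hlead : ∀ m ≤ N, 0 < (p m).leadingCoeff)
    (hchain : ∀ m, 2 ≤ m → m ≤ N →
      ∃ q : Polynomial ℝ, q.degree = 1 ∧ p (m - 2) = q * p (m - 1) - p m) :
    (p 0).roots.toFinset.card = N := by
  have main : ∀ j, j ≤ N - 1 → ∃ r : Fin (j+1) → ℝ, StrictMono r ∧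
      (∀ i, (p (N-1-j)).eval (r i) = 0) ∧
      ∀ i : Fin (j+1), 0 < (-1:ℝ)^(j + (i:ℕ)) * (p (N-j)).eval (r i) := by
    intro j
    induction j with
    | zero =>
      intro _
      have hd1 : (p (N-1)).natDegree = 1 := by rw [hdeg (N-1) (by omega)]; omega
      have hl1 := hlead (N-1) (by omega)
      have hc1 : (p (N-1)).coeff 1 = (p (N-1)).leadingCoeff := by
        rw [leadingCoeff, hd1]
      have hform := eq_X_add_C_of_natDegree_le_one (le_of_eq hd1)
      set c := (p (N-1)).coeff 1 with hc
      have hcpos : 0 < c := by rw [hc1]; exact hl1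
      set x0 : ℝ := -((p (N-1)).coeff 0) / c with hx0
      have heval : (p (N-1)).eval x0 = 0 := by
        conv_lhs => rw [hform]
        simp only [eval_add, eval_mul, eval_C, eval_X, hx0]
        field_simp
        ring
      have hdN : (p N).natDegree = 0 := by rw [hdeg N (le_refl N)]; omega
      have hformN := eq_C_of_natDegree_eq_zero hdN
      have hlN := hlead N (le_refl N)
      have hcoeffN : 0 < (p N).coeff 0 := by rwa [leadingCoeff, hdN] at hlN
      refine ⟨fun _ => x0, fun a b hab => absurd hab (by
        have : a = b := by omega
        rw [this]; exact lt_irrefl b), fun i => ?_, fun i => ?_⟩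
      · simp only [Nat.sub_self]; exact heval
      · have hiz : (i:ℕ) = 0 := by omega
        rw [hiz]
        simp only [Nat.sub_zero, pow_zero, add_zero, one_mul]
        conv_lhs => rw [show (0:ℝ) = 0 from rfl]
        rw [hformN]; simp [hcoeffN]
    | succ j ih =>
      intro hj1
      have hjN : j ≤ N - 1 := by omega
      rcases ih hjN with ⟨r, hr, hroot, hsign⟩
      set M := N - 1 - j with hM
      have hM1 : 1 ≤ M := by omega
      have hMe : N - j = M + 1 := by omega
      rcases hchain (M+1) (by omega) (by omega) with ⟨q, hq, heq⟩
      have hi1 : M + 1 - 2 = M - 1 := by omega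
      have hi2 : M + 1 - 1 = M := by omega
      rw [hi1, hi2] at heq
      have hroot' : ∀ i, (p M).eval (r i) = 0 := hroot
      have hsign' : ∀ i : Fin (j+1), 0 < (-1:ℝ)^(j + (i:ℕ)) * (p (M+1)).eval (r i) := by
        rw [← hMe]; exact hsign
      have hrel : ∀ i, (p (M-1)).eval (r i) = -((p (M+1)).eval (r i)) := by
        intro i
        rw [heq]
        simp [hroot' i]
      have hfd : (p M).natDegree = j + 1 := by rw [hdeg M (by omega)]; omega
      have hed : (p (M-1)).natDegree = j + 2 := by rw [hdeg (M-1) (by omega)]; omega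
      rcases key_step j (p M) (p (M+1)) (p (M-1)) hfd (hlead M (by omega)) hed
        (hlead (M-1) (by omega)) r hr hroot' hsign' hrel with ⟨s, hs, hs0, hs1⟩
      have e1 : N - 1 - (j+1) = M - 1 := by omega
      have e2 : N - (j+1) = M := by omega
      rw [e1, e2]
      exact ⟨s, hs, hs0, hs1⟩
  rcases main (N-1) (le_refl _) with ⟨r, hr, hroot, _⟩
  have e0 : N - 1 - (N - 1) = 0 := by omega
  rw [e0] at hroot
  have hp0 : p 0 ≠ 0 := by
    have := hlead 0 (by omega)
    exact leadingCoeff_ne_zero.mp (ne_of_gt this)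
  have hsub : Finset.image r Finset.univ ⊆ (p 0).roots.toFinset := by
    intro x hx
    rcases Finset.mem_image.1 hx with ⟨i, _, rfl⟩
    rw [Multiset.mem_toFinset, mem_roots']
    exact ⟨hp0, hroot i⟩
  have hge : N ≤ (p 0).roots.toFinset.card := by
    calc N = (Finset.image r Finset.univ).card := by
          rw [Finset.card_image_of_injective _ hr.injective]; simp; omega
      _ ≤ _ := Finset.card_le_card hsub
  have hle : (p 0).roots.toFinset.card ≤ N := by
    have h1 := (p 0).roots.toFinset_card_le
    have h2 := (p 0).card_roots'
    have h3 : (p 0).natDegree = N := by rw [hdeg 0 (by omega)]; omega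
    omega
  omega
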